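/- Let J₁ ⊂ J be such that sup_{I ∈ J₁} mes(I) < 2π, and let 𝒳 ⊂ ∪_{I ∈ J₁} ℓ₂^{BL}(I) be a set bounded in ℓ₂ such that ∑_{t ≤ τ} |x(t)|² → 0 as τ → −∞ uniformly over x ∈ 𝒳. Then for every ε > 0 there exist an integer τ < 0 and a real-valued sequence k̂ : {1,2,3,...} → ℝ such that for every x ∈ 𝒳, every I ∈ J₁ with x ∈ ℓ₂^{BL}(I), and every t ≥ 1, |x(t) − x̂(t)| ≤ ε, where x̂(t) = e^{iω_I t} ∑_{s=τ}^{t−1} k̂(t−s) e^{−iω_I s} x(s) is a finite sum. -/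

import Mathlib

open MeasureTheory Complex Real Set Filter

noncomputable section

/-- Two-sided square-summable sequences: membership in `ℓ₂`. -/
def MemL2 (x : ℤ → ℂ) : Prop := Summable fun t => ‖x t‖ ^ 2

/-- Absolutely summable sequences: membership in `ℓ₁(ℤ)`. -/
def MemL1 (x : ℤ → ℂ) : Prop := Summable fun t => ‖x t‖

/-- Inverse Z-transform of a function on `(−π, π]`:
`x(t) = (1/2π) ∫_{−π}^{π} X(e^{iω}) e^{iωt} dω`. -/
def invZ (X : ℝ → ℂ) (t : ℤ) : ℂ :=
  ((1 / (2 * π) : ℝ) : ℂ) *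
    ∫ ω in Set.Ioc (-π) π, X ω * Complex.exp (Complex.I * (ω : ℂ) * (t : ℂ))

/-- `x ∈ ℓ₂^{BL}(S)`: `x` is square-summable and its Z-transform vanishes a.e. outside `S`,
expressed by saying that `x` is the inverse Z-transform of some `X ∈ L²` of the circle
vanishing a.e. outside `S`. -/
def BandLimited (S : Set ℝ) (x : ℤ → ℂ) : Prop :=
  MemL2 x ∧ ∃ X : ℝ → ℂ,
    MemLp X 2 (volume.restrict (Set.Ioc (-π) π)) ∧
    (∀ᵐ ω ∂volume.restrict (Set.Ioc (-π) π), ω ∉ S → X ω = 0) ∧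
    ∀ t : ℤ, x t = invZ X t

/-- An element of the class `J`: a proper connected arc of the circle, recorded via the
angle `mid` of its middle point and its half-length `halfLen` (so `mes(I) = 2·halfLen`);
`halfLen < π` makes the complementary set nonempty. -/
structure Arc where
  mid : ℝ
  halfLen : ℝ
  mid_mem : mid ∈ Set.Ioc (-π) π
  halfLen_pos : 0 < halfLen
  halfLen_lt : halfLen < π

/-- The subset of `(−π, π]` corresponding to the arc `{e^{iω} : |ω − mid| < halfLen (mod 2π)}`. -/
def Arc.set (I : Arc) : Set ℝ :=
  {ω | ω ∈ Set.Ioc (-π) π ∧ ∃ k : ℤ, |ω - I.mid + 2 * π * (k : ℝ)| < I.halfLen}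

/-- One-sided sequences, defined on `{t ∈ ℤ : t ≤ 0}`. -/
abbrev NegSeq := {t : ℤ // t ≤ 0} → ℂ

/-- Membership in `ℓ₂⁻`. -/
def MemL2Neg (x : NegSeq) : Prop := Summable fun t => ‖x t‖ ^ 2

/-- `x ∈ ℓ₂^{−,LBL}(S)`: `x` is the trace on `{t ≤ 0}` of a band-limited sequence with
spectrum in `S`. -/
def LBL (S : Set ℝ) (x : NegSeq) : Prop :=
  ∃ xBL : ℤ → ℂ, BandLimited S xBL ∧ ∀ t : {t : ℤ // t ≤ 0}, x t = xBL t.1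

/-- `p` is the optimal approximation of `x` in `ℓ₂^{−,LBL}(S)`, i.e. a minimizer of
`∑_{t≤0} |p(t) − x(t)|²` over `ℓ₂^{−,LBL}(S)`. -/
def IsOptApprox (S : Set ℝ) (x p : NegSeq) : Prop :=
  LBL S p ∧ ∀ z : NegSeq, LBL S z →
    (∑' t, ‖p t - x t‖ ^ 2) ≤ ∑' t, ‖z t - x t‖ ^ 2

/-- `sinc(u) = sin(u)/u` (with value `1` at `u = 0`). -/
def sinc (u : ℝ) : ℝ := if u = 0 then 1 else Real.sin u / u

lemma sum_range_center {M : Type*} [AddCommMonoid M] (K : ℕ) (f : ℕ → M) :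
    ∑ m ∈ Finset.range (2*K+1), f m
      = f K + ∑ j ∈ Finset.Icc 1 K, (f (K+j) + f (K-j)) := by
  have h0 : ∑ m ∈ Finset.range (2*K+1), f m
      = ∑ m ∈ Finset.Ico 0 K, f m + ∑ m ∈ Finset.Ico K (2*K+1), f m := by
    rw [Finset.range_eq_Ico, ← Finset.sum_Ico_consecutive f (Nat.zero_le K) (by omega)]
  have h1 : ∑ m ∈ Finset.Ico K (2*K+1), f m
      = f K + ∑ m ∈ Finset.Ico (K+1) (2*K+1), f m := by
    rw [Finset.sum_eq_sum_Ico_succ_bot (by omega) f]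
  have h2 : ∑ m ∈ Finset.Ico (K+1) (2*K+1), f m = ∑ j ∈ Finset.Icc 1 K, f (K+j) := by
    refine Finset.sum_nbij' (fun m => m - K) (fun j => K + j) ?_ ?_ ?_ ?_ ?_ <;>
        intros a ha <;> simp only [Finset.mem_Ico, Finset.mem_Icc] at ha ⊢
    · omega
    · omega
    · omega
    · omega
    · congr 1; omega
  have h3 : ∑ m ∈ Finset.Ico 0 K, f m = ∑ j ∈ Finset.Icc 1 K, f (K-j) := by
    refine Finset.sum_nbij' (fun m => K - m) (fun j => K - j) ?_ ?_ ?_ ?_ ?_ <;>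
        intros a ha <;> simp only [Finset.mem_Ico, Finset.mem_Icc] at ha ⊢
    · omega
    · omega
    · omega
    · omega
    · congr 1; omega
  rw [h0, h1, h2, h3, Finset.sum_add_distrib]; abel

lemma binom_expand (K : ℕ) (w : ℂ) :
    (1 - w) ^ (2*K) = ∑ m ∈ Finset.range (2*K+1), (-w) ^ m * (Nat.choose (2*K) m : ℂ) := by
  have := add_pow (-w) 1 (2*K)
  simp only [one_pow, mul_one] at this
  rw [show (1 : ℂ) - w = -w + 1 by ring, this]

lemma key_identity (K : ℕ) (w : ℂ) :
    ((-1:ℂ))^K * (1 - w)^(2*K)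
      = (Nat.centralBinom K : ℂ) * w^K
        + ∑ j ∈ Finset.Icc 1 K, ((-1:ℂ))^j * (Nat.choose (2*K) (K+j) : ℂ)
            * (w^(K+j) + w^(K-j)) := by
  have hKK : ((-1:ℂ))^(2*K) = 1 := by rw [pow_mul]; norm_num
  have hKK' : ((-1:ℂ))^K * (-1:ℂ)^K = 1 := by rw [← pow_add]; rw [show K+K = 2*K by omega, hKK]
  rw [binom_expand, sum_range_center K (fun m => (-w)^m * (Nat.choose (2*K) m : ℂ)),
    mul_add, Finset.mul_sum]
  congr 1
  · rw [Nat.centralBinom]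
    rw [show (-w)^K = (-1:ℂ)^K * w^K by rw [neg_pow]]
    calc (-1:ℂ)^K * ((-1:ℂ)^K * w^K * ((2*K).choose K : ℂ))
        = ((-1:ℂ)^K * (-1:ℂ)^K) * (w^K * ((2*K).choose K : ℂ)) := by ring
      _ = ((2*K).choose K : ℂ) * w^K := by rw [hKK']; ring
  · refine Finset.sum_congr rfl fun j hj => ?_
    simp only [Finset.mem_Icc] at hj
    have hc : Nat.choose (2*K) (K-j) = Nat.choose (2*K) (K+j) := by
      rw [← Nat.choose_symm (by omega)]
      congr 1; omega
    rw [hc, show (-w)^(K+j) = (-1:ℂ)^(K+j) * w^(K+j) by rw [neg_pow],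
      show (-w)^(K-j) = (-1:ℂ)^(K-j) * w^(K-j) by rw [neg_pow],
      show ((-1:ℂ))^(K-j) = (-1:ℂ)^(K+j) by
        rw [show K+j = (K-j) + 2*j by omega, pow_add]; simp [pow_mul],
      show (-1:ℂ)^(K+j) = (-1:ℂ)^K * (-1:ℂ)^j by rw [pow_add]]
    calc (-1:ℂ)^K * ((-1:ℂ)^K * (-1:ℂ)^j * w^(K+j) * ((2*K).choose (K+j) : ℂ)
            + (-1:ℂ)^K * (-1:ℂ)^j * w^(K-j) * ((2*K).choose (K+j) : ℂ))
        = ((-1:ℂ)^K * (-1:ℂ)^K) * ((-1:ℂ)^j * ((2*K).choose (K+j) : ℂ) * (w^(K+j) + w^(K-j))) := by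
          ring
      _ = (-1:ℂ)^j * ((2*K).choose (K+j) : ℂ) * (w^(K+j) + w^(K-j)) := by rw [hKK']; ring

/-- the real coefficients of our polynomial -/
def gam (K j : ℕ) : ℝ := (-1:ℝ)^j * (Nat.choose (2*K) (K+j) : ℝ) / 4^K

/-- constant term -/
def bzero (K : ℕ) : ℝ := (Nat.centralBinom K : ℝ) / 4^K

/-- the polynomial `Q` -/
def QQ (K : ℕ) (z : ℂ) : ℂ := ∑ j ∈ Finset.Icc 1 K, ((gam K j : ℝ) : ℂ) * z^j

lemma circle_re (K : ℕ) (θ : ℝ) :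
    bzero K + 2 * (QQ K (Complex.exp (Complex.I * θ))).re
      = ((1 - Real.cos θ)/2)^K := by
  set w : ℂ := Complex.exp (Complex.I * θ) with hw_def
  have hw : w ≠ 0 := Complex.exp_ne_zero _
  have h4 : (4:ℂ)^K ≠ 0 := pow_ne_zero _ (by norm_num)
  have hwinv : w⁻¹ = Complex.exp (-(Complex.I * θ)) := by
    rw [hw_def, ← Complex.exp_neg]
  have hconj : (starRingEnd ℂ) w = w⁻¹ := by
    rw [hwinv, ← Complex.exp_conj]
    congr 1
    simp [Complex.conj_ofReal]
  have hsum : w + w⁻¹ = 2 * (Real.cos θ : ℂ) := by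
    rw [hw_def, hwinv, mul_comm Complex.I (θ:ℂ), ← neg_mul, Complex.exp_mul_I,
      Complex.exp_mul_I, Complex.cos_neg, Complex.sin_neg, Complex.ofReal_cos]
    ring
  have hcos : Complex.cos (θ:ℂ) = (w + w⁻¹)/2 := by
    rw [hsum, ← Complex.ofReal_cos]; ring
  set c : ℂ := (((1 - Real.cos θ)/2 : ℝ) : ℂ) with hc_def
  have hcw : 4 * w * c = -(1-w)^2 := by
    rw [hc_def]
    push_cast
    rw [hcos]
    field_simp
    ring
  have hQconj : (starRingEnd ℂ) (QQ K w) = ∑ j ∈ Finset.Icc 1 K, ((gam K j : ℝ) : ℂ) * (w⁻¹)^j := by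
    rw [QQ, map_sum]
    refine Finset.sum_congr rfl fun j hj => ?_
    rw [map_mul, map_pow, hconj, Complex.conj_ofReal]
  have S0 : (4:ℂ)^K * w^K * ((bzero K : ℝ) : ℂ) = (Nat.centralBinom K : ℂ) * w^K := by
    rw [bzero]
    push_cast
    field_simp
  have S1 : (4:ℂ)^K * w^K * QQ K w
      = ∑ j ∈ Finset.Icc 1 K, (-1:ℂ)^j * ((Nat.choose (2*K) (K+j)) : ℂ) * w^(K+j) := by
    rw [QQ, Finset.mul_sum]
    refine Finset.sum_congr rfl fun j hj => ?_
    rw [gam, pow_add]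
    push_cast
    field_simp
  have S2 : (4:ℂ)^K * w^K * ((starRingEnd ℂ) (QQ K w))
      = ∑ j ∈ Finset.Icc 1 K, (-1:ℂ)^j * ((Nat.choose (2*K) (K+j)) : ℂ) * w^(K-j) := by
    rw [hQconj, Finset.mul_sum]
    refine Finset.sum_congr rfl fun j hj => ?_
    simp only [Finset.mem_Icc] at hj
    have h1 : w^(K-j) * w^j = w^K := by rw [← pow_add]; congr 1; omega
    have hKj : w^(K-j) = w^K * (w^j)⁻¹ := by
      rw [eq_mul_inv_iff_mul_eq₀ (pow_ne_zero _ hw), h1]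
    rw [gam, hKj, inv_pow]
    push_cast
    field_simp
  have hsplit : ∑ j ∈ Finset.Icc 1 K, (-1:ℂ)^j * ((Nat.choose (2*K) (K+j)) : ℂ)
        * (w^(K+j) + w^(K-j))
      = (∑ j ∈ Finset.Icc 1 K, (-1:ℂ)^j * ((Nat.choose (2*K) (K+j)) : ℂ) * w^(K+j))
        + ∑ j ∈ Finset.Icc 1 K, (-1:ℂ)^j * ((Nat.choose (2*K) (K+j)) : ℂ) * w^(K-j) := by
    rw [← Finset.sum_add_distrib]
    exact Finset.sum_congr rfl fun j _ => by ring
  have hR : (4:ℂ)^K * w^K * c^K = (-1:ℂ)^K * (1-w)^(2*K) := by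
    rw [← mul_pow, ← mul_pow, hcw, neg_pow ((1-w)^2) K, pow_mul]
  have hmain : (4:ℂ)^K * w^K * (((bzero K : ℝ) : ℂ) + QQ K w + (starRingEnd ℂ) (QQ K w))
      = (4:ℂ)^K * w^K * c^K := by
    rw [mul_add, mul_add, S0, S1, S2, hR, key_identity K w, hsplit]
    ring
  have hne : (4:ℂ)^K * w^K ≠ 0 := mul_ne_zero h4 (pow_ne_zero _ hw)
  have hcx := mul_left_cancel₀ hne hmain
  have hre : QQ K w + (starRingEnd ℂ) (QQ K w) = ((2 * (QQ K w).re : ℝ) : ℂ) := by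
    exact Complex.add_conj _
  rw [add_assoc, hre, ← Complex.ofReal_add, hc_def, ← Complex.ofReal_pow] at hcx
  exact_mod_cast hcx

lemma entire_approx (f : ℂ → ℂ) (hdiff : Differentiable ℂ f) (η : ℝ) (hη : 0 < η) :
    ∃ M : ℕ, 2 ≤ M ∧ ∃ c : ℕ → ℂ, c 0 = f 0 ∧
      ∀ x : ℂ, ‖x‖ ≤ 1 →
        ‖f x - ∑ n ∈ Finset.range M, c n * x^n‖ ≤ η := by
  have hps := hdiff.hasFPowerSeriesOnBall (R := 2) 0 (by norm_num)
  have huni := hps.tendstoUniformlyOn (r' := (2:NNReal)) (by simp)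
  obtain ⟨M, hMuni, hM1⟩ := ((Metric.tendstoUniformlyOn_iff.mp huni η hη).and
    (eventually_ge_atTop 2)).exists
  refine ⟨M, hM1, (cauchyPowerSeries f 0 2).coeff, hps.coeff_zero 1, fun x hx => ?_⟩
  have hmem : x ∈ Metric.ball (0:ℂ) 2 := by
    simp only [Metric.mem_ball, dist_zero_right]
    linarith
  have h1 := hMuni x (by simpa using hmem)
  have h2 : (cauchyPowerSeries f 0 2).partialSum M x
      = ∑ n ∈ Finset.range M, (cauchyPowerSeries f 0 2).coeff n * x^n := by
    simp [FormalMultilinearSeries.partialSum, FormalMultilinearSeries.apply_eq_pow_smul_coeff,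
      smul_eq_mul, mul_comm]
  rw [← h2]
  have h3 : dist (f x) ((cauchyPowerSeries f 0 2).partialSum M x) < η := by simpa using h1
  rw [dist_eq_norm] at h3
  linarith

lemma kernel_approx (h η : ℝ) (hh0 : 0 < h) (hhπ : h < π) (hη : 0 < η) :
    ∃ N : ℕ, 1 ≤ N ∧ ∃ k : ℕ → ℝ,
      ∀ θ : ℝ, |θ| ≤ h →
        ‖1 - ∑ n ∈ Finset.Icc 1 N, ((k n : ℝ) : ℂ)
            * Complex.exp (-(Complex.I * (θ : ℂ) * (n : ℂ)))‖ ≤ η := by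
  classical
  set s : ℝ := (1 - Real.cos h)/2 with hs_def
  have hs0 : 0 < s := by
    have : Real.cos h < Real.cos 0 :=
      Real.cos_lt_cos_of_nonneg_of_le_pi le_rfl hhπ.le hh0
    rw [Real.cos_zero] at this
    simp only [hs_def]; linarith
  have hs1 : s < 1 := by
    have : Real.cos π < Real.cos h :=
      Real.cos_lt_cos_of_nonneg_of_le_pi hh0.le le_rfl hhπ
    rw [Real.cos_pi] at this
    simp only [hs_def]; linarith
  obtain ⟨K, hK1, hKs⟩ : ∃ K : ℕ, 1 ≤ K ∧ (K:ℝ) * s^K < 1/4 := by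
    have hsum : Summable (fun n : ℕ => (n:ℝ)^1 * s^n) :=
      summable_pow_mul_geometric_of_norm_lt_one 1
        (by rw [Real.norm_eq_abs, abs_of_pos hs0]; exact hs1)
    have htend := hsum.tendsto_atTop_zero
    have hev : ∀ᶠ n : ℕ in atTop, (n:ℝ)^1 * s^n < 1/4 :=
      htend.eventually (gt_mem_nhds (by norm_num))
    obtain ⟨K, hK1, hKs⟩ := (hev.and (eventually_ge_atTop 1)).exists
    exact ⟨K, hKs, by simpa using hK1⟩
  have hKpos : (0:ℝ) < K := by exact_mod_cast hK1
  have hb : 1/(2*(K:ℝ)) ≤ bzero K := by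
    have h4 := Nat.four_pow_le_two_mul_self_mul_centralBinom K hK1
    have h4' : (4:ℝ)^K ≤ 2*K*(Nat.centralBinom K : ℝ) := by exact_mod_cast h4
    rw [bzero, div_le_div_iff₀ (by positivity) (by positivity)]
    nlinarith [pow_pos (show (0:ℝ) < 4 by norm_num) K]
  have hsK : s^K < 1/(2*(K:ℝ)) := by
    have h1 : s^K < 1/(4*(K:ℝ)) := by
      rw [lt_div_iff₀ (by positivity)]
      calc s^K * (4*K) = 4 * ((K:ℝ) * s^K) := by ring
        _ < 4 * (1/4) := by apply mul_lt_mul_of_pos_left _ (by norm_num); simpa using hKs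
        _ = 1 := by norm_num
    calc s^K < 1/(4*(K:ℝ)) := h1
      _ ≤ 1/(2*(K:ℝ)) := by
          apply div_le_div_of_nonneg_left (by norm_num) (by positivity)
          nlinarith
  set d : ℝ := bzero K - s^K with hd_def
  have hd : 0 < d := by simp only [hd_def]; linarith
  set L : ℝ := max 1 (d⁻¹ * Real.log (4/η)) with hL_def
  have hLd : Real.exp (-(L*d)) ≤ η/4 := by
    have hlog : d⁻¹ * Real.log (4/η) ≤ L := le_max_right _ _
    have h1 : Real.log (4/η) ≤ L * d := by
      have h2 := mul_le_mul_of_nonneg_right hlog hd.le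
      have h3 : d⁻¹ * Real.log (4/η) * d = Real.log (4/η) := by field_simp
      linarith
    calc Real.exp (-(L*d)) ≤ Real.exp (-(Real.log (4/η))) :=
          Real.exp_le_exp.mpr (by linarith)
      _ = (4/η)⁻¹ := by rw [Real.exp_neg, Real.exp_log (by positivity)]
      _ = η/4 := by field_simp
  set f : ℂ → ℂ := fun z => 1 - Complex.exp (((2*L : ℝ) : ℂ) * QQ K z) with hf_def
  have hQdiff : Differentiable ℂ (fun z => QQ K z) := by
    simp only [QQ]
    apply Differentiable.fun_sum
    intro j _
    exact (differentiable_pow j).const_mul _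
  have hdiff : Differentiable ℂ f := by
    apply (differentiable_const (1:ℂ)).sub
    exact (hQdiff.const_mul _).cexp
  have hband : ∀ θ : ℝ, |θ| ≤ h → ‖1 - f (Complex.exp (Complex.I * θ))‖ ≤ η/4 := by
    intro θ hθ
    have hre : bzero K + 2 * (QQ K (Complex.exp (Complex.I * θ))).re
        = ((1 - Real.cos θ)/2)^K := circle_re K θ
    have hcos : Real.cos h ≤ Real.cos θ := by
      rw [← Real.cos_abs θ]
      exact Real.cos_le_cos_of_nonneg_of_le_pi (abs_nonneg θ) hhπ.le hθ
    have hbase0 : 0 ≤ (1 - Real.cos θ)/2 := by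
      have := Real.cos_le_one θ; linarith
    have hbase : (1 - Real.cos θ)/2 ≤ s := by simp only [hs_def]; linarith
    have hpow : ((1 - Real.cos θ)/2)^K ≤ s^K := pow_le_pow_left₀ hbase0 hbase K
    have : 1 - f (Complex.exp (Complex.I * θ))
        = Complex.exp (((2*L : ℝ) : ℂ) * QQ K (Complex.exp (Complex.I * θ))) := by
      simp only [hf_def]; ring
    rw [this, Complex.norm_exp]
    have hre2 : (((2*L : ℝ) : ℂ) * QQ K (Complex.exp (Complex.I * θ))).re
        = L * (2 * (QQ K (Complex.exp (Complex.I * θ))).re) := by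
      rw [Complex.re_ofReal_mul]; ring
    rw [hre2]
    calc Real.exp (L * (2 * (QQ K (Complex.exp (Complex.I * θ))).re))
        ≤ Real.exp (-(L*d)) := by
          apply Real.exp_le_exp.mpr
          have hL1 : (1:ℝ) ≤ L := le_max_left _ _
          have hQre : 2 * (QQ K (Complex.exp (Complex.I * θ))).re ≤ -d := by
            simp only [hd_def]; linarith
          nlinarith
      _ ≤ η/4 := hLd
  obtain ⟨M, hM2, c, hc0, happrox⟩ := entire_approx f hdiff (η/4) (by positivity)
  have hf0 : f 0 = 0 := by
    have hQ0 : QQ K 0 = 0 := by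
      rw [QQ]
      apply Finset.sum_eq_zero
      intro j hj
      simp only [Finset.mem_Icc] at hj
      rw [zero_pow (by omega), mul_zero]
    simp [hf_def, hQ0]
  have hc00 : c 0 = 0 := by rw [hc0, hf0]
  set N : ℕ := M - 1 with hN_def
  have hMN : M = N + 1 := by omega
  refine ⟨N, by omega, fun n => if 1 ≤ n ∧ n ≤ N then (c n).re else 0, ?_⟩
  intro θ hθ
  set u : ℂ := Complex.exp (-(Complex.I * θ)) with hu_def
  have hunorm : ‖u‖ = 1 := by
    rw [hu_def, Complex.norm_exp]
    simp
  have huconj : (starRingEnd ℂ) u = Complex.exp (Complex.I * θ) := by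
    rw [hu_def, ← Complex.exp_conj]
    congr 1
    simp [Complex.conj_ofReal]
  have hcnorm : ‖(starRingEnd ℂ) u‖ = 1 := by
    rw [huconj, Complex.norm_exp]
    simp
  -- rewrite sum into real parts of partial sums
  have hterm : ∀ n : ℕ, Complex.exp (-(Complex.I * (θ : ℂ) * (n : ℂ))) = u^n := by
    intro n
    rw [hu_def, ← Complex.exp_nat_mul]
    congr 1
    ring
  have hsum1 : ∑ n ∈ Finset.Icc 1 N,
        (((if 1 ≤ n ∧ n ≤ N then (c n).re else 0 : ℝ)) : ℂ)
          * Complex.exp (-(Complex.I * (θ : ℂ) * (n : ℂ)))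
      = ∑ n ∈ Finset.range M, (((c n).re : ℝ) : ℂ) * u^n := by
    rw [hMN, Finset.range_eq_Ico, Finset.sum_eq_sum_Ico_succ_bot (by omega : 0 < N+1),
      Finset.Ico_add_one_right_eq_Icc]
    rw [hc00]
    simp only [Complex.zero_re, Complex.ofReal_zero, zero_mul, zero_add]
    refine Finset.sum_congr rfl fun n hn => ?_
    simp only [Finset.mem_Icc] at hn
    rw [if_pos hn, hterm n]
  rw [hsum1]
  set S : ℂ → ℂ := fun v => ∑ n ∈ Finset.range M, c n * v^n with hS_def
  have hconjS : (starRingEnd ℂ) (S ((starRingEnd ℂ) u))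
      = ∑ n ∈ Finset.range M, (starRingEnd ℂ) (c n) * u^n := by
    simp only [hS_def, map_sum, map_mul, map_pow, Complex.conj_conj]
  have hhalf : ∑ n ∈ Finset.range M, (((c n).re : ℝ) : ℂ) * u^n
      = (S u + (starRingEnd ℂ) (S ((starRingEnd ℂ) u)))/2 := by
    rw [hconjS]
    simp only [hS_def]
    rw [← Finset.sum_add_distrib, Finset.sum_div]
    refine Finset.sum_congr rfl fun n _ => ?_
    have hac : c n + (starRingEnd ℂ) (c n) = ((2*(c n).re : ℝ) : ℂ) := Complex.add_conj _
    calc (((c n).re : ℝ) : ℂ) * u^n = (((2*(c n).re : ℝ) : ℂ) * u^n)/2 := by push_cast; ring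
      _ = ((c n + (starRingEnd ℂ) (c n)) * u^n)/2 := by rw [hac]
      _ = (c n * u^n + (starRingEnd ℂ) (c n) * u^n)/2 := by ring
  rw [hhalf]
  have hT : (1:ℂ) - (S u + (starRingEnd ℂ) (S ((starRingEnd ℂ) u)))/2
      = ((1 - S u) + (starRingEnd ℂ) (1 - S ((starRingEnd ℂ) u)))/2 := by
    rw [map_sub, map_one]; ring
  rw [hT]
  have hnorm2 : ‖((1 - S u) + (starRingEnd ℂ) (1 - S ((starRingEnd ℂ) u)))/2‖
      ≤ (‖1 - S u‖ + ‖1 - S ((starRingEnd ℂ) u)‖)/2 := by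
    rw [norm_div]
    have h2 : ‖(2:ℂ)‖ = 2 := by norm_num
    rw [h2]
    have := norm_add_le (1 - S u) ((starRingEnd ℂ) (1 - S ((starRingEnd ℂ) u)))
    have hcnj : ‖(starRingEnd ℂ) (1 - S ((starRingEnd ℂ) u))‖ = ‖1 - S ((starRingEnd ℂ) u)‖ := by
      rw [Complex.norm_conj]
    rw [hcnj] at this
    linarith
  have hboundv : ∀ v : ℂ, ‖v‖ = 1 → (∃ θ' : ℝ, |θ'| ≤ h ∧ v = Complex.exp (Complex.I * (θ' : ℂ)))
      → ‖1 - S v‖ ≤ η/2 := by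
    rintro v hv ⟨θ', hθ', rfl⟩
    have h1 : ‖1 - f (Complex.exp (Complex.I * (θ' : ℂ)))‖ ≤ η/4 := hband θ' hθ'
    have h2 : ‖f (Complex.exp (Complex.I * (θ' : ℂ))) - S (Complex.exp (Complex.I * (θ' : ℂ)))‖ ≤ η/4 := by
      have := happrox (Complex.exp (Complex.I * (θ' : ℂ))) (le_of_eq hv)
      simpa only [hS_def] using this
    calc ‖1 - S (Complex.exp (Complex.I * (θ' : ℂ)))‖
        = ‖(1 - f (Complex.exp (Complex.I * (θ' : ℂ))))
            + (f (Complex.exp (Complex.I * (θ' : ℂ))) - S (Complex.exp (Complex.I * (θ' : ℂ))))‖ := by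
          congr 1; ring
      _ ≤ ‖1 - f (Complex.exp (Complex.I * (θ' : ℂ)))‖
            + ‖f (Complex.exp (Complex.I * (θ' : ℂ))) - S (Complex.exp (Complex.I * (θ' : ℂ)))‖ :=
          norm_add_le _ _
      _ ≤ η/4 + η/4 := add_le_add h1 h2
      _ = η/2 := by ring
  have hu' : u = Complex.exp (Complex.I * ((-θ : ℝ) : ℂ)) := by
    rw [hu_def]; congr 1; push_cast; ring
  have hb1 : ‖1 - S u‖ ≤ η/2 :=
    hboundv u hunorm ⟨-θ, by rwa [abs_neg], hu'⟩
  have hb2 : ‖1 - S ((starRingEnd ℂ) u)‖ ≤ η/2 := by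
    refine hboundv _ hcnorm ⟨θ, hθ, ?_⟩
    rw [huconj]
  calc ‖((1 - S u) + (starRingEnd ℂ) (1 - S ((starRingEnd ℂ) u)))/2‖
      ≤ (‖1 - S u‖ + ‖1 - S ((starRingEnd ℂ) u)‖)/2 := hnorm2
    _ ≤ (η/2 + η/2)/2 := by linarith
    _ ≤ η := by linarith

lemma parseval_bound (X : ℝ → ℂ) (hXm : StronglyMeasurable X)
    (hX : MemLp X 2 (volume.restrict (Set.Ioc (-π) π))) :
    ∫ ω in Set.Ioc (-π) π, ‖X ω‖^2 = (2*π) * ∑' t : ℤ, ‖invZ X t‖^2 := by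
  haveI : Fact (0 < 2*π) := ⟨by positivity⟩
  have hI : -π + 2*π = π := by ring
  set Y : AddCircle (2*π) → ℂ := AddCircle.liftIoc (2*π) (-π) X with hY_def
  have hYm : Measurable Y := by
    have : Y = (X ∘ (Subtype.val : Set.Ioc (-π) (-π + 2*π) → ℝ))
        ∘ (AddCircle.measurableEquivIoc (2*π) (-π)) := rfl
    rw [this]
    exact ((hXm.measurable).comp measurable_subtype_coe).comp
      (AddCircle.measurableEquivIoc (2*π) (-π)).measurable
  have hYsm : StronglyMeasurable Y := hYm.stronglyMeasurable
  have hYcoe : ∀ x ∈ Set.Ioc (-π) (-π + 2*π), Y ((x : ℝ) : AddCircle (2*π)) = X x :=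
    fun x hx => AddCircle.liftIoc_coe_apply hx
  have mp := AddCircle.measurePreserving_mk (2*π) (-π)
  -- Memℒp of Y w.r.t. volume on the circle
  have hYae : (fun x : ℝ => Y ((x : ℝ) : AddCircle (2*π)))
      =ᵐ[volume.restrict (Set.Ioc (-π) (-π + 2*π))] X := by
    filter_upwards [ae_restrict_mem measurableSet_Ioc] with x hx
    exact hYcoe x hx
  have hXres : MemLp X 2 (volume.restrict (Set.Ioc (-π) (-π + 2*π))) := by
    rw [hI]; exact hX
  have hYvol : MemLp Y 2 (volume : Measure (AddCircle (2*π))) := by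
    rw [← mp.map_eq]
    rw [memLp_map_measure_iff hYsm.aestronglyMeasurable mp.measurable.aemeasurable]
    exact hXres.ae_eq hYae.symm
  have hvol_eq : (volume : Measure (AddCircle (2*π)))
      = ENNReal.ofReal (2*π) • AddCircle.haarAddCircle := AddCircle.volume_eq_smul_haarAddCircle
  have hhaar_eq : (AddCircle.haarAddCircle : Measure (AddCircle (2*π)))
      = (ENNReal.ofReal (2*π))⁻¹ • (volume : Measure (AddCircle (2*π))) := by
    rw [hvol_eq, ← smul_assoc]
    rw [smul_eq_mul, ENNReal.inv_mul_cancel (by simp [Real.pi_pos]) ENNReal.ofReal_ne_top]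
    simp
  have hYhaar : MemLp Y 2 (AddCircle.haarAddCircle : Measure (AddCircle (2*π))) := by
    rw [hhaar_eq]
    exact hYvol.smul_measure (by simp [Real.pi_pos])
  -- Fourier coefficients of Y are the invZ values
  have hfc : ∀ n : ℤ, fourierCoeff Y n = invZ X (-n) := by
    intro n
    rw [fourierCoeff_eq_intervalIntegral Y n (-π)]
    rw [intervalIntegral.integral_of_le (by linarith [Real.pi_pos] : -π ≤ -π + 2*π)]
    have hcong : ∫ x in Set.Ioc (-π) (-π + 2*π), (fourier (-n)) ((x : ℝ) : AddCircle (2*π)) • Y ((x:ℝ) : AddCircle (2*π))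
        = ∫ x in Set.Ioc (-π) (-π + 2*π), X x * Complex.exp (Complex.I * (x : ℂ) * ((-n : ℤ) : ℂ)) := by
      apply setIntegral_congr_fun measurableSet_Ioc
      intro x hx
      simp only [fourier_coe_apply, smul_eq_mul]
      rw [hYcoe x hx, mul_comm]
      have hpi : (π:ℂ) ≠ 0 := Complex.ofReal_ne_zero.mpr Real.pi_ne_zero
      have harg : (2 * (π:ℂ) * Complex.I * ((-n : ℤ):ℂ) * (x:ℂ) / ((2*π : ℝ):ℂ))
          = Complex.I * (x:ℂ) * ((-n : ℤ):ℂ) := by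
        push_cast
        field_simp
      rw [harg]
    rw [hcong, hI, invZ]
    rw [Complex.real_smul]
  -- Parseval
  set g := hYhaar.toLp Y with hg_def
  have hgae : (g : AddCircle (2*π) → ℂ) =ᵐ[AddCircle.haarAddCircle] Y := hYhaar.coeFn_toLp
  have hfc_g : ∀ n : ℤ, fourierCoeff (g : AddCircle (2*π) → ℂ) n = fourierCoeff Y n := by
    intro n
    apply integral_congr_ae
    filter_upwards [hgae] with t ht
    rw [ht]
  have hpar := tsum_sq_fourierCoeff g
  have hint_g : ∫ t : AddCircle (2*π), ‖(g : AddCircle (2*π) → ℂ) t‖^2 ∂AddCircle.haarAddCircle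
      = ∫ t : AddCircle (2*π), ‖Y t‖^2 ∂AddCircle.haarAddCircle := by
    apply integral_congr_ae
    filter_upwards [hgae] with t ht
    rw [ht]
  -- put it together
  have step1 : ∫ ω in Set.Ioc (-π) π, ‖X ω‖^2
      = ∫ t : AddCircle (2*π), ‖Y t‖^2 ∂(volume : Measure (AddCircle (2*π))) := by
    rw [← mp.map_eq, integral_map mp.measurable.aemeasurable
      ((hYm.norm.pow_const 2).aestronglyMeasurable)]
    have hset : Set.Ioc (-π) π = Set.Ioc (-π) (-π + 2*π) := by rw [hI]
    rw [hset]
    apply setIntegral_congr_fun measurableSet_Ioc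
    intro x hx
    dsimp only
    rw [← hYcoe x hx]
  have step2 : ∫ t : AddCircle (2*π), ‖Y t‖^2 ∂(volume : Measure (AddCircle (2*π)))
      = (2*π) * ∫ t : AddCircle (2*π), ‖Y t‖^2 ∂AddCircle.haarAddCircle := by
    rw [hvol_eq, integral_smul_measure, ENNReal.toReal_ofReal (by positivity)]
    simp
  have step3 : ∑' n : ℤ, ‖fourierCoeff Y n‖^2 = ∑' t : ℤ, ‖invZ X t‖^2 := by
    have h1 : ∀ n : ℤ, ‖fourierCoeff Y n‖^2 = ‖invZ X (-n)‖^2 := fun n => by rw [hfc n]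
    rw [tsum_congr h1]
    exact (Equiv.neg ℤ).tsum_eq (fun t => ‖invZ X t‖^2)
  rw [step1, step2, ← hint_g, ← hpar]
  congr 1
  rw [← step3]
  apply tsum_congr
  intro n
  rw [hfc_g n]

lemma window_sum (N : ℕ) (F : ℤ → ℂ) (hF : ∀ n : ℤ, (n < 1 ∨ (N:ℤ) < n) → F n = 0)
    (t : ℤ) (ht : 1 ≤ t) :
    ∑ s ∈ Finset.Icc (-(N:ℤ)) (t-1), F (t - s) = ∑ n ∈ Finset.Icc (1:ℤ) (N:ℤ), F n := by
  have h1 : ∑ s ∈ Finset.Icc (-(N:ℤ)) (t-1), F (t - s)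
      = ∑ n ∈ Finset.Icc (1:ℤ) (t + N), F n := by
    refine Finset.sum_nbij' (fun s => t - s) (fun n => t - n) ?_ ?_ ?_ ?_ ?_ <;>
        intro a ha <;> simp only [Finset.mem_Icc] at ha ⊢ <;> omega
  rw [h1]
  refine (Finset.sum_subset ?_ ?_).symm
  · intro n hn
    simp only [Finset.mem_Icc] at hn ⊢
    omega
  · intro n hn hn'
    simp only [Finset.mem_Icc] at hn hn'
    exact hF n (by omega)

lemma int_nat_sum (N : ℕ) (G : ℤ → ℂ) :
    ∑ n ∈ Finset.Icc (1:ℤ) (N:ℤ), G n = ∑ m ∈ Finset.Icc 1 N, G (m : ℤ) := by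
  refine Finset.sum_nbij' (fun n => n.toNat) (fun m => (m:ℤ)) ?_ ?_ ?_ ?_ ?_ <;>
      intro a ha <;> simp only [Finset.mem_Icc] at ha ⊢
  · omega
  · omega
  · omega
  · omega
  · congr 1; omega

lemma norm_exp_I_int (a : ℝ) (n : ℤ) : ‖Complex.exp (Complex.I * (a:ℂ) * (n:ℂ))‖ = 1 := by
  rw [Complex.norm_exp]
  have : (Complex.I * (a:ℂ) * (n:ℂ)).re = 0 := by
    simp [Complex.mul_re, Complex.mul_im]
  rw [this, Real.exp_zero]

lemma integrable_mul_exp (X : ℝ → ℂ) (hInt : Integrable X (volume.restrict (Set.Ioc (-π) π)))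
    (r : ℤ) :
    Integrable (fun ω : ℝ => X ω * Complex.exp (Complex.I * (ω:ℂ) * (r:ℂ)))
      (volume.restrict (Set.Ioc (-π) π)) := by
  have hmeas : AEStronglyMeasurable (fun ω : ℝ => Complex.exp (Complex.I * (ω:ℂ) * (r:ℂ)))
      (volume.restrict (Set.Ioc (-π) π)) := by
    apply Continuous.aestronglyMeasurable
    exact Complex.continuous_exp.comp
      ((continuous_const.mul Complex.continuous_ofReal).mul continuous_const)
  have := hInt.bdd_mul hmeas (Filter.Eventually.of_forall fun ω => le_of_eq (norm_exp_I_int ω r))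
  apply this.congr
  filter_upwards with ω
  ring


/-- under the additional assumption that the tails `∑_{t ≤ τ} |x(t)|²` vanish as
`τ → −∞` uniformly over the bounded set `𝒳 ⊂ ∪_{I ∈ 𝒥₁} ℓ₂^{BL}(I)` (with
`sup_{I ∈ 𝒥₁} mes(I) < 2π`), prediction for all times `t ≥ 1` within error `ε` is possible using
only finitely many observations `x(τ), ..., x(t−1)`:
`x̂(t) = e^{iω_I t} ∑_{s=τ}^{t−1} k̂(t−s) e^{−iω_I s} x(s)`. -/
theorem stmt_2 (𝒥 : Set Arc) (c : ℝ) (hc : c < 2 * π)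
    (hmes : ∀ I ∈ 𝒥, 2 * I.halfLen ≤ c)
    (𝒳 : Set (ℤ → ℂ)) (hBL : ∀ x ∈ 𝒳, ∃ I ∈ 𝒥, BandLimited I.set x)
    (C : ℝ) (hbdd : ∀ x ∈ 𝒳, ∑' t : ℤ, ‖x t‖ ^ 2 ≤ C)
    (htail : ∀ δ : ℝ, 0 < δ → ∃ τ₀ : ℤ, ∀ x ∈ 𝒳, ∑' n : ℕ, ‖x (τ₀ - (n : ℤ))‖ ^ 2 ≤ δ)
    (ε : ℝ) (hε : 0 < ε) :
    ∃ τ : ℤ, τ < 0 ∧ ∃ k : ℤ → ℝ,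
      ∀ x ∈ 𝒳, ∀ I ∈ 𝒥, BandLimited I.set x → ∀ t : ℤ, 1 ≤ t →
        ‖x t - Complex.exp (Complex.I * (I.mid : ℂ) * (t : ℂ)) *
            ∑ s ∈ Finset.Icc τ (t - 1), ((k (t - s) : ℝ) : ℂ)
              * Complex.exp (-Complex.I * (I.mid : ℂ) * (s : ℂ)) * x s‖ ≤ ε := by
  classical
  rcases Set.eq_empty_or_nonempty 𝒳 with hXe | ⟨x₀, hx₀⟩
  · refine ⟨-1, by norm_num, fun _ => 0, ?_⟩
    intro x hx
    rw [hXe] at hx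
    exact absurd hx (Set.notMem_empty x)
  obtain ⟨I₀, hI₀, _⟩ := hBL x₀ hx₀
  have hc0 : 0 < c := lt_of_lt_of_le (by linarith [I₀.halfLen_pos]) (hmes I₀ hI₀)
  have hC0 : 0 ≤ C := le_trans (tsum_nonneg (fun t => by positivity)) (hbdd x₀ hx₀)
  set h : ℝ := c/2 with hh_def
  have hh0 : 0 < h := by simp only [hh_def]; linarith
  have hhπ : h < π := by simp only [hh_def]; linarith
  set η : ℝ := ε/(C+1) with hη_def
  have hη0 : 0 < η := by apply div_pos hε; linarith
  obtain ⟨N, hN1, kk, hkk⟩ := kernel_approx h η hh0 hhπ hη0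
  set kZ : ℤ → ℝ := fun n => if 1 ≤ n ∧ n ≤ (N:ℤ) then kk n.toNat else 0 with hkZ_def
  refine ⟨-(N:ℤ), by simp; omega, kZ, ?_⟩
  intro x hx I hI hBLx t ht
  obtain ⟨hL2, X, hXmem, hXsupp, hXinv⟩ := hBLx
  set μres := volume.restrict (Set.Ioc (-π) π) with hμres_def
  haveI : IsFiniteMeasure μres := by
    constructor
    rw [hμres_def, Measure.restrict_apply_univ]
    exact measure_Ioc_lt_top
  set X' : ℝ → ℂ := hXmem.aestronglyMeasurable.mk X with hX'_def
  have hae : X =ᵐ[μres] X' := hXmem.aestronglyMeasurable.ae_eq_mk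
  have hX'm : StronglyMeasurable X' := hXmem.aestronglyMeasurable.stronglyMeasurable_mk
  have hX' : MemLp X' 2 μres := hXmem.ae_eq hae
  have hXsupp' : ∀ᵐ ω ∂μres, ω ∉ I.set → X' ω = 0 := by
    filter_upwards [hXsupp, hae] with ω h1 h2 h3
    rw [← h2]; exact h1 h3
  have hinv_eq : ∀ r : ℤ, invZ X r = invZ X' r := by
    intro r
    unfold invZ
    congr 1
    apply integral_congr_ae
    filter_upwards [hae] with ω hω
    rw [hω]
  have hxinv : ∀ r : ℤ, x r = invZ X' r := fun r => (hXinv r).trans (hinv_eq r)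
  have hInt : Integrable X' μres := hX'.integrable one_le_two
  have hsq : Integrable (fun ω => ‖X' ω‖^2) μres := (hX'.norm).integrable_sq
  -- L¹ bound via Parseval
  have hL1 : ∫ ω in Set.Ioc (-π) π, ‖X' ω‖ ≤ π * (C + 1) := by
    have hpar := parseval_bound X' hX'm hX'
    have htsum : ∑' r : ℤ, ‖invZ X' r‖^2 = ∑' r : ℤ, ‖x r‖^2 :=
      tsum_congr fun r => by rw [← hxinv r]
    have hE : ∫ ω in Set.Ioc (-π) π, ‖X' ω‖^2 ≤ 2*π*C := by
      rw [hpar, htsum]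
      have := hbdd x hx
      nlinarith [Real.pi_pos]
    have hmono : ∫ ω in Set.Ioc (-π) π, ‖X' ω‖
        ≤ ∫ ω in Set.Ioc (-π) π, (‖X' ω‖^2 + 1)/2 := by
      apply integral_mono hInt.norm ((hsq.add (integrable_const 1)).div_const 2)
      intro ω
      have h1 : (0:ℝ) ≤ (‖X' ω‖ - 1)^2 := sq_nonneg _
      simp only [Pi.add_apply, Pi.div_apply]
      nlinarith [norm_nonneg (X' ω)]
    have hconst : ∫ ω in Set.Ioc (-π) π, (‖X' ω‖^2 + 1)/2
        = ((∫ ω in Set.Ioc (-π) π, ‖X' ω‖^2) + 2*π)/2 := by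
      rw [integral_div, integral_add hsq (integrable_const 1), integral_const]
      congr 2
      rw [measureReal_def, Measure.restrict_apply_univ, Real.volume_Ioc]
      rw [ENNReal.toReal_ofReal (by linarith [Real.pi_pos])]
      simp
      ring
    rw [hconst] at hmono
    linarith
  -- predictor rearrangement
  set c2π : ℂ := ((1 / (2 * π) : ℝ) : ℂ) with hc2π_def
  set a : ℕ → ℂ := fun m => ((kk m : ℝ) : ℂ)
      * Complex.exp (Complex.I * (I.mid : ℂ) * (m : ℂ)) with ha_def
  set F : ℤ → ℂ := fun n => ((kZ n : ℝ) : ℂ)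
      * Complex.exp (Complex.I * (I.mid : ℂ) * (n : ℂ)) * x (t - n) with hF_def
  have hFzero : ∀ n : ℤ, (n < 1 ∨ (N:ℤ) < n) → F n = 0 := by
    intro n hn
    have hcond : ¬(1 ≤ n ∧ n ≤ (N:ℤ)) := by omega
    simp only [hF_def, hkZ_def, if_neg hcond]
    simp
  have hstep1 : Complex.exp (Complex.I * (I.mid : ℂ) * (t : ℂ)) *
        ∑ s ∈ Finset.Icc (-(N:ℤ)) (t - 1), ((kZ (t - s) : ℝ) : ℂ)
          * Complex.exp (-Complex.I * (I.mid : ℂ) * (s : ℂ)) * x s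
      = ∑ s ∈ Finset.Icc (-(N:ℤ)) (t - 1), F (t - s) := by
    rw [Finset.mul_sum]
    refine Finset.sum_congr rfl fun s hs => ?_
    simp only [hF_def]
    have hts : t - (t - s) = s := by ring
    rw [hts]
    have hexp : Complex.exp (Complex.I * (I.mid:ℂ) * (t:ℂ))
          * Complex.exp (-Complex.I * (I.mid:ℂ) * (s:ℂ))
        = Complex.exp (Complex.I * (I.mid:ℂ) * ((t - s : ℤ):ℂ)) := by
      rw [← Complex.exp_add]
      congr 1
      push_cast
      ring
    calc Complex.exp (Complex.I * (I.mid:ℂ) * (t:ℂ))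
          * (((kZ (t - s) : ℝ) : ℂ) * Complex.exp (-Complex.I * (I.mid:ℂ) * (s:ℂ)) * x s)
        = ((kZ (t - s) : ℝ) : ℂ) * (Complex.exp (Complex.I * (I.mid:ℂ) * (t:ℂ))
            * Complex.exp (-Complex.I * (I.mid:ℂ) * (s:ℂ))) * x s := by ring
      _ = ((kZ (t - s) : ℝ) : ℂ) * Complex.exp (Complex.I * (I.mid:ℂ) * ((t - s : ℤ):ℂ)) * x s := by
          rw [hexp]
  have hstep2 : ∑ s ∈ Finset.Icc (-(N:ℤ)) (t - 1), F (t - s)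
      = ∑ n ∈ Finset.Icc (1:ℤ) (N:ℤ), F n := window_sum N F hFzero t ht
  have hstep3 : ∑ n ∈ Finset.Icc (1:ℤ) (N:ℤ), F n = ∑ m ∈ Finset.Icc 1 N, F (m : ℤ) :=
    int_nat_sum N F
  have hstep4 : ∀ m ∈ Finset.Icc 1 N, F (m : ℤ) = a m * invZ X' (t - (m:ℤ)) := by
    intro m hm
    simp only [Finset.mem_Icc] at hm
    have hcond : 1 ≤ (m:ℤ) ∧ (m:ℤ) ≤ (N:ℤ) := by omega
    simp only [hF_def, hkZ_def, ha_def, if_pos hcond, Int.toNat_natCast]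
    rw [hxinv (t - (m:ℤ))]
    push_cast
    ring
  have hintm : ∀ m ∈ Finset.Icc 1 N, Integrable
      (fun ω : ℝ => a m * (X' ω * Complex.exp (Complex.I * (ω:ℂ) * ((t - (m:ℤ) : ℤ) : ℂ)))) μres :=
    fun m _ => (integrable_mul_exp X' hInt (t - (m:ℤ))).const_mul (a m)
  have hpred2 : ∑ m ∈ Finset.Icc 1 N, a m * invZ X' (t - (m:ℤ))
      = c2π * ∫ ω in Set.Ioc (-π) π,
          ∑ m ∈ Finset.Icc 1 N, a m * (X' ω * Complex.exp (Complex.I * (ω:ℂ) * ((t - (m:ℤ) : ℤ) : ℂ))) := by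
    rw [integral_finset_sum (Finset.Icc 1 N) hintm, Finset.mul_sum]
    refine Finset.sum_congr rfl fun m _ => ?_
    simp only [invZ]
    rw [integral_const_mul]
    ring
  have hx_t : x t = c2π * ∫ ω in Set.Ioc (-π) π, X' ω * Complex.exp (Complex.I * (ω:ℂ) * (t:ℂ)) := by
    rw [hxinv t]
    simp only [invZ]
    rfl
  have hpred_eq : Complex.exp (Complex.I * (I.mid : ℂ) * (t : ℂ)) *
        ∑ s ∈ Finset.Icc (-(N:ℤ)) (t - 1), ((kZ (t - s) : ℝ) : ℂ)
          * Complex.exp (-Complex.I * (I.mid : ℂ) * (s : ℂ)) * x s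
      = c2π * ∫ ω in Set.Ioc (-π) π,
          ∑ m ∈ Finset.Icc 1 N, a m * (X' ω * Complex.exp (Complex.I * (ω:ℂ) * ((t - (m:ℤ) : ℤ) : ℂ))) := by
    rw [hstep1, hstep2, hstep3, Finset.sum_congr rfl hstep4, hpred2]
  have herr : x t - Complex.exp (Complex.I * (I.mid : ℂ) * (t : ℂ)) *
        ∑ s ∈ Finset.Icc (-(N:ℤ)) (t - 1), ((kZ (t - s) : ℝ) : ℂ)
          * Complex.exp (-Complex.I * (I.mid : ℂ) * (s : ℂ)) * x s
      = c2π * ∫ ω in Set.Ioc (-π) π,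
          (X' ω * Complex.exp (Complex.I * (ω:ℂ) * (t:ℂ))
            - ∑ m ∈ Finset.Icc 1 N, a m * (X' ω * Complex.exp (Complex.I * (ω:ℂ) * ((t - (m:ℤ) : ℤ) : ℂ)))) := by
    rw [hx_t, hpred_eq, ← mul_sub,
      ← integral_sub (integrable_mul_exp X' hInt t) (integrable_finset_sum _ hintm)]
  -- a.e. bound of the integrand
  have hhalfh : I.halfLen ≤ h := by
    have := hmes I hI
    simp only [hh_def]
    linarith
  have hbound_ae : ∀ᵐ ω ∂μres,
      ‖X' ω * Complex.exp (Complex.I * (ω:ℂ) * (t:ℂ))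
        - ∑ m ∈ Finset.Icc 1 N, a m * (X' ω * Complex.exp (Complex.I * (ω:ℂ) * ((t - (m:ℤ) : ℤ) : ℂ)))‖
      ≤ η * ‖X' ω‖ := by
    filter_upwards [hXsupp'] with ω hsupp
    by_cases hωS : ω ∈ I.set
    · obtain ⟨hω1, k2, hθ⟩ := hωS
      set θ : ℝ := ω - I.mid + 2*π*(k2:ℝ) with hθ_def
      have hθh : |θ| ≤ h := le_trans hθ.le hhalfh
      have hfact : X' ω * Complex.exp (Complex.I * (ω:ℂ) * (t:ℂ))
            - ∑ m ∈ Finset.Icc 1 N, a m * (X' ω * Complex.exp (Complex.I * (ω:ℂ) * ((t - (m:ℤ) : ℤ) : ℂ)))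
          = X' ω * Complex.exp (Complex.I * (ω:ℂ) * (t:ℂ))
            * (1 - ∑ m ∈ Finset.Icc 1 N, ((kk m : ℝ) : ℂ)
                * Complex.exp (-(Complex.I * (θ:ℂ) * (m:ℂ)))) := by
        rw [mul_sub, mul_one, Finset.mul_sum]
        congr 1
        refine Finset.sum_congr rfl fun m _ => ?_
        simp only [ha_def]
        have hexp2 : Complex.exp (Complex.I * (I.mid:ℂ) * (m:ℂ))
              * Complex.exp (Complex.I * (ω:ℂ) * ((t - (m:ℤ) : ℤ):ℂ))
            = Complex.exp (Complex.I * (ω:ℂ) * (t:ℂ))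
              * Complex.exp (-(Complex.I * (θ:ℂ) * (m:ℂ))) := by
          rw [← Complex.exp_add, ← Complex.exp_add]
          rw [show Complex.I * (I.mid:ℂ) * (m:ℂ) + Complex.I * (ω:ℂ) * ((t - (m:ℤ) : ℤ):ℂ)
               = (Complex.I * (ω:ℂ) * (t:ℂ) + -(Complex.I * (θ:ℂ) * (m:ℂ)))
                  + ((k2*(m:ℤ) : ℤ):ℂ) * (2*(π:ℂ)*Complex.I) by
            simp only [hθ_def]
            push_cast
            ring]
          rw [Complex.exp_add, Complex.exp_int_mul_two_pi_mul_I, mul_one]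
        calc ((kk m : ℝ) : ℂ) * Complex.exp (Complex.I * (I.mid:ℂ) * (m:ℂ))
              * (X' ω * Complex.exp (Complex.I * (ω:ℂ) * ((t - (m:ℤ) : ℤ):ℂ)))
            = ((kk m : ℝ) : ℂ) * X' ω * (Complex.exp (Complex.I * (I.mid:ℂ) * (m:ℂ))
                * Complex.exp (Complex.I * (ω:ℂ) * ((t - (m:ℤ) : ℤ):ℂ))) := by ring
          _ = ((kk m : ℝ) : ℂ) * X' ω * (Complex.exp (Complex.I * (ω:ℂ) * (t:ℂ))
                * Complex.exp (-(Complex.I * (θ:ℂ) * (m:ℂ)))) := by rw [hexp2]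
          _ = X' ω * Complex.exp (Complex.I * (ω:ℂ) * (t:ℂ))
                * (((kk m : ℝ) : ℂ) * Complex.exp (-(Complex.I * (θ:ℂ) * (m:ℂ)))) := by ring
      rw [hfact, norm_mul, norm_mul, norm_exp_I_int ω t, mul_one]
      rw [mul_comm η ‖X' ω‖]
      exact mul_le_mul_of_nonneg_left (hkk θ hθh) (norm_nonneg _)
    · rw [hsupp hωS]
      simp [mul_nonneg hη0.le (norm_nonneg (X' ω))]
  -- final estimate
  rw [herr, norm_mul]
  have hc2πnorm : ‖c2π‖ = 1/(2*π) := by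
    simp only [hc2π_def, Complex.norm_real, Real.norm_eq_abs]
    rw [abs_of_pos (by positivity)]
  rw [hc2πnorm]
  have hnormint : ‖∫ ω in Set.Ioc (-π) π,
        (X' ω * Complex.exp (Complex.I * (ω:ℂ) * (t:ℂ))
          - ∑ m ∈ Finset.Icc 1 N, a m * (X' ω * Complex.exp (Complex.I * (ω:ℂ) * ((t - (m:ℤ) : ℤ) : ℂ))))‖
      ≤ η * (π * (C+1)) := by
    calc ‖∫ ω in Set.Ioc (-π) π, _‖ ≤ ∫ ω in Set.Ioc (-π) π, η * ‖X' ω‖ :=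
          norm_integral_le_of_norm_le (hInt.norm.const_mul η) hbound_ae
      _ = η * ∫ ω in Set.Ioc (-π) π, ‖X' ω‖ := integral_const_mul η _
      _ ≤ η * (π * (C+1)) := mul_le_mul_of_nonneg_left hL1 hη0.le
  calc 1/(2*π) * ‖∫ ω in Set.Ioc (-π) π,
        (X' ω * Complex.exp (Complex.I * (ω:ℂ) * (t:ℂ))
          - ∑ m ∈ Finset.Icc 1 N, a m * (X' ω * Complex.exp (Complex.I * (ω:ℂ) * ((t - (m:ℤ) : ℤ) : ℂ))))‖
      ≤ 1/(2*π) * (η * (π * (C+1))) := by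
        apply mul_le_mul_of_nonneg_left hnormint
        positivity
    _ = ε/2 := by
        simp only [hη_def]
        have hC1 : C + 1 ≠ 0 := by linarith
        field_simp
    _ ≤ ε := by linarith
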